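/- Macro-diversity feasibility: let α_n > 0, g_{n,k} ≥ 0 for n = 1,…,N and k = 1,…,K, σ̂ ≥ 0, and define T_i(q) := max_k Σ_{n≠i} α_n g_{n,k} q_n + σ̂ for q ∈ ℝ^N with nonnegative entries. If max_{i,k} Σ_{n≠i} α_n g_{n,k} < 1, then T has a unique nonnegative fixed point, obtainable as the limit of iterating T from any nonnegative starting vector. -/

import Mathlib

theorem stmt_16 (N K : ℕ) (α : Fin N → ℝ) (hα : ∀ n, 0 < α n)
    (g : Fin N → Fin (K + 1) → ℝ) (hg : ∀ n k, 0 ≤ g n k)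
    (σ : ℝ) (hσ : 0 ≤ σ)
    (T : (Fin N → ℝ) → Fin N → ℝ)
    (hT : ∀ q i, T q i =
      (Finset.univ.sup' Finset.univ_nonempty
        (fun k : Fin (K + 1) => ∑ n ∈ Finset.univ.erase i, α n * g n k * q n)) + σ)
    (hfeas : ∀ (i : Fin N) (k : Fin (K + 1)),
      (∑ n ∈ Finset.univ.erase i, α n * g n k) < 1) :
    ∃ q : Fin N → ℝ, (∀ i, 0 ≤ q i) ∧ T q = q ∧
      (∀ q' : Fin N → ℝ, (∀ i, 0 ≤ q' i) → T q' = q' → q' = q) ∧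
      (∀ q0 : Fin N → ℝ, (∀ i, 0 ≤ q0 i) →
        Filter.Tendsto (fun t => T^[t] q0) Filter.atTop (nhds q)) := by
  rcases Nat.eq_zero_or_pos N with hN | hN
  · subst hN
    refine ⟨fun i => i.elim0, fun i => i.elim0, funext fun i => i.elim0,
      fun q' _ _ => funext fun i => i.elim0, fun q0 _ => ?_⟩
    have : (fun t => T^[t] q0) = fun _ => (fun i : Fin 0 => i.elim0) := by
      funext t; funext i; exact i.elim0
    rw [this]; exact tendsto_const_nhds
  haveI : Nonempty (Fin N) := Fin.pos_iff_nonempty.mp hN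
  -- contraction constant
  set c : ℝ := Finset.univ.sup' Finset.univ_nonempty
    (fun p : Fin N × Fin (K + 1) => ∑ n ∈ Finset.univ.erase p.1, α n * g n p.2) with hc_def
  have hc : ∀ i k, (∑ n ∈ Finset.univ.erase i, α n * g n k) ≤ c := fun i k =>
    Finset.le_sup' (fun p : Fin N × Fin (K + 1) =>
      ∑ n ∈ Finset.univ.erase p.1, α n * g n p.2) (Finset.mem_univ (i, k))
  have hsum_nonneg : ∀ i k, (0:ℝ) ≤ ∑ n ∈ Finset.univ.erase i, α n * g n k := fun i k =>
    Finset.sum_nonneg fun n _ => mul_nonneg (hα n).le (hg n k)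
  obtain ⟨i0⟩ := (inferInstance : Nonempty (Fin N))
  have hc0 : 0 ≤ c := le_trans (hsum_nonneg i0 0) (hc i0 0)
  have hc1 : c < 1 := by
    rw [hc_def, Finset.sup'_lt_iff]
    exact fun p _ => hfeas p.1 p.2
  -- Lipschitz estimate
  have key : ∀ q q' : Fin N → ℝ, ∀ i, T q i - T q' i ≤ c * dist q q' := by
    intro q q' i
    rw [hT, hT]
    have h1 : (Finset.univ.sup' Finset.univ_nonempty
        (fun k : Fin (K + 1) => ∑ n ∈ Finset.univ.erase i, α n * g n k * q n)) ≤
        (Finset.univ.sup' Finset.univ_nonempty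
        (fun k : Fin (K + 1) => ∑ n ∈ Finset.univ.erase i, α n * g n k * q' n)) +
        c * dist q q' := by
      apply Finset.sup'_le
      intro k _
      have hk : (∑ n ∈ Finset.univ.erase i, α n * g n k * q n) ≤
          (∑ n ∈ Finset.univ.erase i, α n * g n k * q' n) + c * dist q q' := by
        have : (∑ n ∈ Finset.univ.erase i, α n * g n k * q n) -
            (∑ n ∈ Finset.univ.erase i, α n * g n k * q' n) =
            ∑ n ∈ Finset.univ.erase i, α n * g n k * (q n - q' n) := by
          rw [← Finset.sum_sub_distrib]; apply Finset.sum_congr rfl; intro n _; ring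
        have hb : (∑ n ∈ Finset.univ.erase i, α n * g n k * (q n - q' n)) ≤
            (∑ n ∈ Finset.univ.erase i, α n * g n k) * dist q q' := by
          rw [Finset.sum_mul]
          apply Finset.sum_le_sum
          intro n _
          have h1 : q n - q' n ≤ dist q q' := by
            calc q n - q' n ≤ |q n - q' n| := le_abs_self _
            _ = dist (q n) (q' n) := (Real.dist_eq _ _).symm
            _ ≤ dist q q' := dist_le_pi_dist q q' n
          exact mul_le_mul_of_nonneg_left h1 (mul_nonneg (hα n).le (hg n k))
        have hb2 : (∑ n ∈ Finset.univ.erase i, α n * g n k) * dist q q' ≤ c * dist q q' :=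
          mul_le_mul_of_nonneg_right (hc i k) dist_nonneg
        linarith
      calc (∑ n ∈ Finset.univ.erase i, α n * g n k * q n) ≤
          (∑ n ∈ Finset.univ.erase i, α n * g n k * q' n) + c * dist q q' := hk
        _ ≤ _ :=
            (add_le_add_iff_right _).mpr (Finset.le_sup' (fun k : Fin (K + 1) =>
              ∑ n ∈ Finset.univ.erase i, α n * g n k * q' n) (Finset.mem_univ k))
    linarith
  have hlip : LipschitzWith ⟨c, hc0⟩ T := by
    apply LipschitzWith.of_dist_le_mul
    intro q q'
    rw [dist_pi_le_iff (by positivity)]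
    intro i
    rw [Real.dist_eq, abs_le]
    constructor
    · have h := key q' q i
      rw [dist_comm q' q] at h
      show -(c * dist q q') ≤ T q i - T q' i
      linarith
    · show T q i - T q' i ≤ c * dist q q'; exact key q q' i
  have hcw : ContractingWith ⟨c, hc0⟩ T := ⟨by exact_mod_cast hc1, hlip⟩
  set q : Fin N → ℝ := hcw.fixedPoint T with hq_def
  have hfix : T q = q := hcw.fixedPoint_isFixedPt
  -- T preserves nonnegativity
  have hpres : ∀ w : Fin N → ℝ, (∀ i, 0 ≤ w i) → ∀ i, 0 ≤ T w i := by
    intro w hw i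
    rw [hT]
    have h0 : (0:ℝ) ≤ ∑ n ∈ Finset.univ.erase i, α n * g n 0 * w n :=
      Finset.sum_nonneg fun n _ => mul_nonneg (mul_nonneg (hα n).le (hg n 0)) (hw n)
    have := Finset.le_sup' (fun k : Fin (K + 1) =>
      ∑ n ∈ Finset.univ.erase i, α n * g n k * w n) (Finset.mem_univ (0 : Fin (K+1)))
    linarith
  have hiter : ∀ t, ∀ i, 0 ≤ (T^[t] (fun _ => (0:ℝ))) i := by
    intro t
    induction t with
    | zero => intro i; simp
    | succ t ih =>
        intro i
        rw [Function.iterate_succ_apply']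
        exact hpres _ ih i
  have htend0 : Filter.Tendsto (fun t => T^[t] (fun _ => (0:ℝ))) Filter.atTop (nhds q) :=
    hcw.tendsto_iterate_fixedPoint _
  have hqnn : ∀ i, 0 ≤ q i := by
    intro i
    have : Filter.Tendsto (fun t => (T^[t] (fun _ => (0:ℝ))) i) Filter.atTop (nhds (q i)) :=
      (tendsto_pi_nhds.mp htend0) i
    exact ge_of_tendsto' this fun t => hiter t i
  refine ⟨q, hqnn, hfix, ?_, fun q0 _ => hcw.tendsto_iterate_fixedPoint q0⟩
  intro q' _ hq'
  exact hcw.fixedPoint_unique hq'
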